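/- Let μ_φ and μ_ψ be the Monge–Ampère measures (dd^cφ)^n, (dd^cψ)^n of two continuous semipositive metrics φ, ψ on a line bundle L over an n-dimensional proper scheme X over a non-Archimedean field. Then the comparison principle holds: ∫_{\{φ<ψ\}} (dd^cφ)^n ≥ ∫_{\{φ<ψ\}} (dd^cψ)^n, where {φ<ψ} = {x ∈ X^an : φ(x) < ψ(x)}. -/

import Mathlib

open MeasureTheory

/-- **Comparison principle for Monge–Ampère measures** (Proposition 2.15).
Abstract setting: `Xan` is the compact Berkovich analytification of an
`n`-dimensional proper scheme, `M` is the collection of continuous semipositive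
metrics on a line bundle `L`, and `φdiff φ ψ` is the continuous function
`φ − ψ` on `Xan`.  The Monge–Ampère measures `μ φ = (dd^cφ)^n` are positive
Radon measures of total mass `deg_L(X)`; the maximum `mx φ ψ` of two continuous
semipositive metrics is again one (with `(mx φ ψ) − χ = max(φ−χ, ψ−χ)`
pointwise); constant shifts `shift φ ε` satisfy `(φ+ε) − ψ = ε + (φ−ψ)` and
`(dd^c(φ+ε))^n = (dd^cφ)^n`; and the formation of the Monge–Ampère measure is
local in the Berkovich topology: if `φ − ψ` vanishes on an open set `U`, then
`μ φ` and `μ ψ` agree on Borel subsets of `U`.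
Then `∫_{\{φ<ψ\}} (dd^cφ)^n ≥ ∫_{\{φ<ψ\}} (dd^cψ)^n`, where
`{φ<ψ} = {x : φ(x) < ψ(x)}`. -/
theorem stmt11 {Xan M : Type} [TopologicalSpace Xan] [CompactSpace Xan]
    [MeasurableSpace Xan] [BorelSpace Xan]
    (degL : ENNReal) (hdegL : degL ≠ ⊤)
    (φdiff : M → M → C(Xan, ℝ))
    (hcocycle : ∀ a b c : M, φdiff a b + φdiff b c = φdiff a c)
    (μ : M → Measure Xan)
    (hmass : ∀ φ, μ φ Set.univ = degL)
    (mx : M → M → M)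
    (hmx : ∀ φ ψ χ : M, φdiff (mx φ ψ) χ = (φdiff φ χ) ⊔ (φdiff ψ χ))
    (shift : M → ℝ → M)
    (hshiftdiff : ∀ (φ : M) (c : ℝ) (ψ : M),
      φdiff (shift φ c) ψ = ContinuousMap.const Xan c + φdiff φ ψ)
    (hshiftμ : ∀ (φ : M) (c : ℝ), μ (shift φ c) = μ φ)
    (hlocal : ∀ (φ ψ : M) (U : Set Xan), IsOpen U → (∀ x ∈ U, φdiff φ ψ x = 0) →
      ∀ s : Set Xan, s ⊆ U → MeasurableSet s → μ φ s = μ ψ s)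
    (φ ψ : M) :
    μ ψ {x : Xan | φdiff φ ψ x < 0} ≤ μ φ {x : Xan | φdiff φ ψ x < 0} := by

  set f : C(Xan, ℝ) := φdiff φ ψ with hf
  -- φdiff ψ ψ = 0
  have hzero : φdiff ψ ψ = 0 := by
    have := hcocycle ψ ψ ψ
    exact add_eq_left.mp this
  set S : Set Xan := {x : Xan | f x < 0} with hS
  have hSopen : IsOpen S := isOpen_lt f.continuous continuous_const
  -- key estimate for each ε > 0
  have key : ∀ ε : ℝ, 0 < ε → μ ψ {x : Xan | f x < -ε} ≤ μ φ S := by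
    intro ε hε
    set A : Set Xan := {x : Xan | f x < -ε} with hA
    set B : Set Xan := {x : Xan | -ε < f x} with hB
    have hAopen : IsOpen A := isOpen_lt f.continuous continuous_const
    have hBopen : IsOpen B := isOpen_lt continuous_const f.continuous
    set m : M := mx (shift φ ε) ψ with hm
    have hg : φdiff m ψ = (ContinuousMap.const Xan ε + f) ⊔ 0 := by
      rw [hm, hmx, hshiftdiff, hzero]
    -- μ m = μ ψ on subsets of A
    have hAeq : μ m A = μ ψ A := by
      refine hlocal m ψ A hAopen ?_ A (le_refl A) hAopen.measurableSet
      intro x hx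
      rw [hg]
      simp only [ContinuousMap.sup_apply, ContinuousMap.add_apply,
        ContinuousMap.const_apply, ContinuousMap.zero_apply]
      have : f x < -ε := hx
      have h1 : ε + f x < 0 := by linarith
      exact max_eq_right h1.le
    -- μ m = μ φ on subsets of B
    have hBeq : μ m B = μ φ B := by
      have h1 : μ m B = μ (shift φ ε) B := by
        refine hlocal m (shift φ ε) B hBopen ?_ B (le_refl B) hBopen.measurableSet
        intro x hx
        have hco := hcocycle m (shift φ ε) ψ
        have hval : φdiff m ψ x = φdiff m (shift φ ε) x + φdiff (shift φ ε) ψ x := by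
          rw [← hco]; simp
        have hx' : -ε < f x := hx
        have h2 : φdiff m ψ x = ε + f x := by
          rw [hg]
          simp only [ContinuousMap.sup_apply, ContinuousMap.add_apply,
            ContinuousMap.const_apply, ContinuousMap.zero_apply]
          have : (0:ℝ) ≤ ε + f x := by linarith
          exact max_eq_left this
        have h3 : φdiff (shift φ ε) ψ x = ε + f x := by
          rw [hshiftdiff]; simp; rfl
        rw [h2, h3] at hval
        linarith
      rw [h1, hshiftμ]
    -- combine
    have hBc : Bᶜ = {x : Xan | f x ≤ -ε} := by
      ext x; simp [hB, not_lt]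
    have hBcS : Bᶜ ⊆ S := by
      rw [hBc]
      intro x hx
      have : f x ≤ -ε := hx
      show f x < 0
      linarith
    have hadd : μ ψ A + μ φ B ≤ μ φ Bᶜ + μ φ B := by
      calc μ ψ A + μ φ B = μ m A + μ m B := by rw [hAeq, hBeq]
        _ ≤ μ m A + μ m Aᶜ := by
            gcongr
            intro x hx
            have hx' : -ε < f x := hx
            show ¬ f x < -ε
            linarith
        _ = μ m Set.univ := (measure_add_measure_compl hAopen.measurableSet)
        _ = degL := hmass m
        _ = μ φ Set.univ := (hmass φ).symm
        _ = μ φ Bᶜ + μ φ B := by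
            rw [add_comm, measure_add_measure_compl hBopen.measurableSet]
    have hfin : μ φ B ≠ ⊤ := by
      have : μ φ B ≤ degL := by rw [← hmass φ]; exact measure_mono (Set.subset_univ B)
      exact ne_top_of_le_ne_top hdegL this
    have hle : μ ψ A ≤ μ φ Bᶜ := by
      exact (ENNReal.add_le_add_iff_right hfin).mp hadd
    exact hle.trans (measure_mono hBcS)
  -- exhaust S by the sets A_{1/(n+1)}
  have hunion : S = ⋃ n : ℕ, {x : Xan | f x < -(1 / (n + 1))} := by
    ext x
    simp only [Set.mem_iUnion, Set.mem_setOf_eq]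
    constructor
    · intro hx
      have hx' : f x < 0 := hx
      obtain ⟨n, hn⟩ := exists_nat_one_div_lt (show (0:ℝ) < -f x by linarith)
      exact ⟨n, by linarith⟩
    · rintro ⟨n, hn⟩
      have h0 : (0:ℝ) < 1 / ((n:ℝ) + 1) := by positivity
      show f x < 0
      linarith
  have hmono : Monotone (fun n : ℕ => {x : Xan | f x < -(1 / (n + 1))}) := by
    intro a b hab x hx
    have hx' : f x < -(1 / (a + 1)) := hx
    show f x < -(1 / (b + 1))
    have hcast : (a:ℝ) ≤ b := Nat.cast_le.mpr hab
    have h1 : (1:ℝ) / ((b:ℝ) + 1) ≤ 1 / ((a:ℝ) + 1) :=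
      one_div_le_one_div_of_le (by positivity) (by linarith)
    linarith
  calc μ ψ S = ⨆ n : ℕ, μ ψ {x : Xan | f x < -(1 / (n + 1))} := by
        rw [hunion]
        exact hmono.measure_iUnion
    _ ≤ μ φ S := by
        apply iSup_le
        intro n
        exact key (1 / (n + 1)) (by positivity)
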